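/- Assume the tangency and alignment conditions: σ(x) = ρ(x)ξ(x) with ρ(x) = r(H(x)) and λ(x) = l(H(x)). Then for every α > 0 and every x ∈ ℝ², the inertial drift g_α(x) = (α / (2(λ(x) + α))) · [ D(λ⁻¹σ)(x)·(λ⁻¹σ)(x) + (σ(x)σ(x)ᵀ)·∇λ(x)/λ(x)³ ] reduces to g_α(x) = β_α(x) · ν(x)² · Dξ(x)ξ(x), where β_α(x) = α/(2(λ(x)+α)) and ν(x) = r(H(x))/l(H(x)). -/

import Mathlib

noncomputable section

/-- The factorized Hamiltonian `H(x₁,x₂) = h₁(x₁)·h₂(x₂)`. -/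
def Ham (h₁ h₂ : ℝ → ℝ) : ℝ × ℝ → ℝ := fun x => h₁ x.1 * h₂ x.2

/-- The Hamiltonian vector field `ξ = ∇⊥H = (−h₁h₂', h₁'h₂)`. -/
def xiField (h₁ h₂ : ℝ → ℝ) : ℝ × ℝ → ℝ × ℝ :=
  fun x => (-(h₁ x.1 * deriv h₂ x.2), deriv h₁ x.1 * h₂ x.2)

/-- Euclidean scalar product on `ℝ²`. -/
def dotR2 (a b : ℝ × ℝ) : ℝ := a.1 * b.1 + a.2 * b.2

/-- The gradient of a scalar function on `ℝ²`. -/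
def gradR2 (f : ℝ × ℝ → ℝ) (x : ℝ × ℝ) : ℝ × ℝ :=
  (fderiv ℝ f x (1, 0), fderiv ℝ f x (0, 1))

/-- ξ annihilates the differential of H. -/
lemma key_zero (h₁ h₂ : ℝ → ℝ) (hreg₁ : ContDiff ℝ 3 h₁) (hreg₂ : ContDiff ℝ 3 h₂)
    (x : ℝ × ℝ) : fderiv ℝ (Ham h₁ h₂) x (xiField h₁ h₂ x) = 0 := by
  have hd₁ : Differentiable ℝ h₁ := hreg₁.differentiable (by norm_num)
  have hd₂ : Differentiable ℝ h₂ := hreg₂.differentiable (by norm_num)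
  have D1 : HasFDerivAt (fun p : ℝ × ℝ => h₁ p.1)
      ((deriv h₁ x.1) • ContinuousLinearMap.fst ℝ ℝ ℝ) x :=
    HasDerivAt.comp_hasFDerivAt x ((hd₁ x.1).hasDerivAt) hasFDerivAt_fst
  have D2 : HasFDerivAt (fun p : ℝ × ℝ => h₂ p.2)
      ((deriv h₂ x.2) • ContinuousLinearMap.snd ℝ ℝ ℝ) x :=
    HasDerivAt.comp_hasFDerivAt x ((hd₂ x.2).hasDerivAt) hasFDerivAt_snd
  have DH := D1.mul D2
  rw [show Ham h₁ h₂ = fun p : ℝ × ℝ => h₁ p.1 * h₂ p.2 from rfl,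
    show (fun p : ℝ × ℝ => h₁ p.1 * h₂ p.2) = (fun p => h₁ p.1) * (fun p => h₂ p.2) from rfl,
    DH.fderiv]
  simp [xiField, ContinuousLinearMap.smul_apply]
  ring

/-- Any scalar function of H is annihilated by ξ, too. -/
lemma key_zero_comp (h₁ h₂ : ℝ → ℝ) (hreg₁ : ContDiff ℝ 3 h₁) (hreg₂ : ContDiff ℝ 3 h₂)
    (φ : ℝ → ℝ) (x : ℝ × ℝ) (hφ : DifferentiableAt ℝ φ (Ham h₁ h₂ x)) :
    fderiv ℝ (fun y => φ (Ham h₁ h₂ y)) x (xiField h₁ h₂ x) = 0 := by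
  have hd₁ : Differentiable ℝ h₁ := hreg₁.differentiable (by norm_num)
  have hd₂ : Differentiable ℝ h₂ := hreg₂.differentiable (by norm_num)
  have hF : DifferentiableAt ℝ (Ham h₁ h₂) x :=
    ((hd₁ x.1).comp x differentiableAt_fst).mul ((hd₂ x.2).comp x differentiableAt_snd)
  have : fderiv ℝ (φ ∘ Ham h₁ h₂) x = (fderiv ℝ φ (Ham h₁ h₂ x)).comp (fderiv ℝ (Ham h₁ h₂) x) :=
    fderiv_comp x hφ hF
  calc fderiv ℝ (fun y => φ (Ham h₁ h₂ y)) x (xiField h₁ h₂ x)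
      = (fderiv ℝ φ (Ham h₁ h₂ x)) (fderiv ℝ (Ham h₁ h₂) x (xiField h₁ h₂ x)) := by
        rw [show (fun y => φ (Ham h₁ h₂ y)) = φ ∘ Ham h₁ h₂ from rfl, this]; rfl
    _ = 0 := by rw [key_zero h₁ h₂ hreg₁ hreg₂ x]; simp

/-- Under the tangency condition `σ = ρ ξ` and the alignment condition
`λ = l∘H`, `ρ = r∘H`, the inertial drift
`g_α = (α/(2(λ+α)))·[D(λ⁻¹σ)(λ⁻¹σ) + (σσᵀ)∇λ/λ³]`
reduces to `g_α = β_α ν² Dξ ξ`, with `β_α = α/(2(λ+α))` and `ν = (r∘H)/(l∘H)`. -/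
theorem inertial_drift_reduction
    (L l₀ r₀ : ℝ) (hL : 0 < L) (hl₀ : 0 < l₀) (hr₀ : 0 < r₀)
    (h₁ h₂ : ℝ → ℝ)
    (hreg₁ : ContDiff ℝ 3 h₁) (hreg₂ : ContDiff ℝ 3 h₂)
    (hper₁ : Function.Periodic h₁ L) (hper₂ : Function.Periodic h₂ L)
    (hbd₁ : ∀ x : ℝ, |h₁ x| ≤ 1) (hbd₂ : ∀ x : ℝ, |h₂ x| ≤ 1)
    (hmax₁ : ∃ x : ℝ, |h₁ x| = 1) (hmax₂ : ∃ x : ℝ, |h₂ x| = 1)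
    (l r : ℝ → ℝ) (hlreg : ContDiff ℝ 2 l) (hrreg : ContDiff ℝ 2 r)
    (hlb : ∀ s ∈ Set.Icc (-1 : ℝ) 1, l₀ ≤ l s)
    (hrb : ∀ s ∈ Set.Icc (-1 : ℝ) 1, r₀ ≤ (r s) ^ 2)
    -- the aligned friction λ = l∘H and noise σ = ρ ξ with ρ = r∘H
    (lam : ℝ × ℝ → ℝ) (hlam : lam = fun x => l (Ham h₁ h₂ x))
    (sig : ℝ × ℝ → ℝ × ℝ) (hsig : sig = fun x => r (Ham h₁ h₂ x) • xiField h₁ h₂ x)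
    (nu : ℝ × ℝ → ℝ) (hnu : nu = fun x => r (Ham h₁ h₂ x) / l (Ham h₁ h₂ x)) :
    ∀ α : ℝ, 0 < α → ∀ x : ℝ × ℝ,
      (α / (2 * (lam x + α))) •
          (fderiv ℝ (fun y => (lam y)⁻¹ • sig y) x ((lam x)⁻¹ • sig x) +
            (dotR2 (sig x) (gradR2 lam x) / (lam x) ^ 3) • sig x) =
        ((α / (2 * (lam x + α))) * (nu x) ^ 2) •
          fderiv ℝ (xiField h₁ h₂) x (xiField h₁ h₂ x) := by
  intro α hα x
  set F := Ham h₁ h₂ with hF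
  set ξ := xiField h₁ h₂ with hξ
  -- basic differentiability
  have hd₁ : Differentiable ℝ h₁ := hreg₁.differentiable (by norm_num)
  have hd₂ : Differentiable ℝ h₂ := hreg₂.differentiable (by norm_num)
  have hdd₁ : Differentiable ℝ (deriv h₁) := by
    have h3 : ContDiff ℝ (2 + 1 : WithTop ℕ∞) h₁ := by norm_num; exact hreg₁
    exact ((contDiff_succ_iff_deriv.mp h3).2.2).differentiable (by norm_num)
  have hdd₂ : Differentiable ℝ (deriv h₂) := by
    have h3 : ContDiff ℝ (2 + 1 : WithTop ℕ∞) h₂ := by norm_num; exact hreg₂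
    exact ((contDiff_succ_iff_deriv.mp h3).2.2).differentiable (by norm_num)
  have hld : Differentiable ℝ l := hlreg.differentiable (by norm_num)
  have hrd : Differentiable ℝ r := hrreg.differentiable (by norm_num)
  have hFd : DifferentiableAt ℝ F x :=
    ((hd₁ x.1).comp x differentiableAt_fst).mul ((hd₂ x.2).comp x differentiableAt_snd)
  have hξd : DifferentiableAt ℝ ξ x := by
    apply DifferentiableAt.prodMk
    · exact (((hd₁ x.1).comp x differentiableAt_fst).mul
        ((hdd₂ x.2).comp x differentiableAt_snd)).neg
    · exact ((hdd₁ x.1).comp x differentiableAt_fst).mul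
        ((hd₂ x.2).comp x differentiableAt_snd)
  -- l (F x) ≠ 0
  have hmem : F x ∈ Set.Icc (-1 : ℝ) 1 := by
    have : |F x| ≤ 1 := by
      have := mul_le_one₀ (hbd₁ x.1) (abs_nonneg _) (hbd₂ x.2)
      simpa [hF, Ham, abs_mul] using this
    exact abs_le.mp this
  have hlne : l (F x) ≠ 0 := ne_of_gt (lt_of_lt_of_le hl₀ (hlb _ hmem))
  -- ν = g ∘ F with g differentiable at F x
  have hνd : DifferentiableAt ℝ nu x := by
    rw [hnu]
    have hrF : DifferentiableAt ℝ (fun y => r (F y)) x := (hrd (F x)).comp x hFd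
    have hlF : DifferentiableAt ℝ (fun y => l (F y)) x := (hld (F x)).comp x hFd
    simp only [div_eq_mul_inv]
    exact hrF.mul (hlF.inv hlne)
  -- the two key vanishing facts
  have hνzero : fderiv ℝ nu x (ξ x) = 0 := by
    rw [hnu]
    exact key_zero_comp h₁ h₂ hreg₁ hreg₂ (fun s => r s / l s) x
      ((hrd (F x)).div (hld (F x)) hlne)
  have hlamzero : fderiv ℝ lam x (ξ x) = 0 := by
    rw [hlam]
    exact key_zero_comp h₁ h₂ hreg₁ hreg₂ l x (hld (F x))
  have hlamd : DifferentiableAt ℝ lam x := by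
    rw [hlam]; exact (hld (F x)).comp x hFd
  -- (lam)⁻¹ • sig = nu • ξ
  have hm : (fun y => (lam y)⁻¹ • sig y) = (fun y => nu y • ξ y) := by
    funext y
    rw [hlam, hsig, hnu]
    simp [smul_smul, div_eq_inv_mul]
  -- the gradient term vanishes
  have hdot : dotR2 (sig x) (gradR2 lam x) = 0 := by
    have hsplit : (sig x) = (sig x).1 • ((1 : ℝ), (0 : ℝ)) + (sig x).2 • ((0 : ℝ), (1 : ℝ)) := by
      simp [Prod.ext_iff]
    have := (fderiv ℝ lam x).map_add ((sig x).1 • ((1 : ℝ), (0 : ℝ)))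
      ((sig x).2 • ((0 : ℝ), (1 : ℝ)))
    have h1 : fderiv ℝ lam x (sig x)
        = dotR2 (sig x) (gradR2 lam x) := by
      conv_lhs => rw [hsplit]
      rw [map_add, (fderiv ℝ lam x).map_smul, (fderiv ℝ lam x).map_smul]
      simp [dotR2, gradR2, smul_eq_mul]
    have h2 : fderiv ℝ lam x (sig x) = 0 := by
      rw [hsig]
      simp only
      rw [(fderiv ℝ lam x).map_smul, hlamzero]
      simp
    rw [← h1, h2]
  -- compute the fderiv of nu • ξ
  have hD : fderiv ℝ (fun y => nu y • ξ y) x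
      = nu x • fderiv ℝ ξ x + (fderiv ℝ nu x).smulRight (ξ x) :=
    (hνd.hasFDerivAt.smul hξd.hasFDerivAt).fderiv
  have hval : fderiv ℝ (fun y => nu y • ξ y) x (nu x • ξ x)
      = (nu x ^ 2) • fderiv ℝ ξ x (ξ x) := by
    rw [hD]
    simp [ContinuousLinearMap.smul_apply, map_smul, hνzero, smul_smul, sq]
  have hw : (lam x)⁻¹ • sig x = nu x • ξ x := by
    rw [hlam, hsig, hnu]; simp [smul_smul, div_eq_inv_mul]
  rw [hm, hw, hdot, hval]
  simp [smul_smul]
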